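/- Let A ⊂ ℝⁿ be a measurable set such that there exist c₁, r₁ > 0 with |B_t(x) ∩ A| ≥ c₁ |B_t(x)| for all x ∈ A and 0 < t ≤ r₁. Fix 0 < r ≤ r₁ and let C ⊂ D ⊂ A be measurable sets and 0 < ε < 1 such that (i) |C| < ε rⁿ |B₁|, and (ii) for all x ∈ A and ρ ∈ (0, r], if |C ∩ B_ρ(x)| ≥ ε |B_ρ(x)| then B_ρ(x) ∩ A ⊂ D. Then |C| ≤ (C(n) ε / c₁) |D| for a dimensional constant C(n). -/

import Mathlib

open MeasureTheory Metric Set Filter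
open scoped ENNReal Topology

/-- Calderón–Zygmund–Krylov–Safonov type covering lemma: under a uniform measure
density condition on `A`, if `C ⊂ D ⊂ A` satisfy the two conditions (i), (ii) with
parameter `ε`, then `|C| ≤ C(n) ε / c₁ |D|`. -/
theorem covering_lemma (n : ℕ) :
    ∃ Cn : ℝ, 0 < Cn ∧
      ∀ (A C D : Set (Fin n → ℝ)), MeasurableSet A → MeasurableSet C → MeasurableSet D →
        C ⊆ D → D ⊆ A →
        ∀ (c₁ r₁ : ℝ), 0 < c₁ → 0 < r₁ →
          (∀ x ∈ A, ∀ t : ℝ, 0 < t → t ≤ r₁ →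
            ENNReal.ofReal c₁ * volume (ball x t) ≤ volume (ball x t ∩ A)) →
          ∀ (r ε : ℝ), 0 < r → r ≤ r₁ → 0 < ε → ε < 1 →
            volume C < ENNReal.ofReal (ε * r ^ n) * volume (ball (0 : Fin n → ℝ) 1) →
            (∀ x ∈ A, ∀ ρ : ℝ, 0 < ρ → ρ ≤ r →
              ENNReal.ofReal ε * volume (ball x ρ) ≤ volume (C ∩ ball x ρ) →
                ball x ρ ∩ A ⊆ D) →
            volume C ≤ ENNReal.ofReal (Cn * ε / c₁) * volume D := by
  refine ⟨4 ^ n, by positivity, ?_⟩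
  intro A C D hA hC hD hCD hDA c₁ r₁ hc₁ hr₁ hdens r ε hr hrr₁ hε hε1 hCsmall hii
  rcases Nat.eq_zero_or_pos n with hn | hn
  · -- trivial case `n = 0`: the space is a point and `C` must be empty
    subst hn
    rcases eq_empty_or_nonempty C with rfl | ⟨x, hx⟩
    · simp
    exfalso
    have hCuniv : C = univ := eq_univ_of_forall fun y => (Subsingleton.elim x y) ▸ hx
    have hball : ball (0 : Fin 0 → ℝ) 1 = univ :=
      eq_univ_of_forall fun y => by
        simp [mem_ball, Subsingleton.elim y (0 : Fin 0 → ℝ)]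
    rw [hCuniv, hball] at hCsmall
    have h1 : ENNReal.ofReal (ε * r ^ 0) < 1 := by
      rw [pow_zero, mul_one]; exact ENNReal.ofReal_lt_one.2 hε1
    have hle : ENNReal.ofReal (ε * r ^ 0) * volume (univ : Set (Fin 0 → ℝ)) ≤
        volume (univ : Set (Fin 0 → ℝ)) := by
      calc ENNReal.ofReal (ε * r ^ 0) * volume (univ : Set (Fin 0 → ℝ))
          ≤ 1 * volume (univ : Set (Fin 0 → ℝ)) := mul_le_mul_left h1.le _
        _ = volume (univ : Set (Fin 0 → ℝ)) := one_mul _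
    exact absurd (hCsmall.trans_le hle) (lt_irrefl _)
  -- main case `n ≥ 1`
  haveI : Nonempty (Fin n) := ⟨⟨0, hn⟩⟩
  haveI : Nontrivial (Fin n → ℝ) := Function.nontrivial
  set V : ℝ≥0∞ := volume (ball (0 : Fin n → ℝ) 1) with hV
  have hVt : V ≠ ⊤ := measure_ball_lt_top.ne
  have hfr : Module.finrank ℝ (Fin n → ℝ) = n := Module.finrank_fin_fun ℝ
  have hball : ∀ (x : Fin n → ℝ) (ρ : ℝ), 0 ≤ ρ →
      volume (ball x ρ) = ENNReal.ofReal (ρ ^ n) * V := by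
    intro x ρ hρ
    rw [Measure.addHaar_ball volume x hρ, hfr]
  -- the set of "good radii" at `x`
  set S : (Fin n → ℝ) → Set ℝ := fun x =>
    {ρ | ρ ∈ Ioc 0 r ∧ ENNReal.ofReal ε * volume (ball x ρ) ≤ volume (C ∩ ball x ρ)} with hS
  set G : Set (Fin n → ℝ) := {x | x ∈ C ∧ (S x).Nonempty} with hG
  set ρf : (Fin n → ℝ) → ℝ := fun x => sSup (S x) with hρf
  have hbdd : ∀ x, BddAbove (S x) := fun x => ⟨r, fun ρ hρ => hρ.1.2⟩
  have hρ_pos : ∀ x ∈ G, 0 < ρf x := by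
    intro x hx
    obtain ⟨ρ₀, hρ₀⟩ := hx.2
    exact hρ₀.1.1.trans_le (le_csSup (hbdd x) hρ₀)
  have hρ_le : ∀ x ∈ G, ρf x ≤ r := by
    intro x hx
    exact csSup_le hx.2 fun ρ hρ => hρ.1.2
  -- the density condition holds at the supremum radius
  have hρ_mem : ∀ x ∈ G,
      ENNReal.ofReal ε * volume (ball x (ρf x)) ≤ volume (C ∩ ball x (ρf x)) := by
    intro x hx
    have hne := hx.2
    have hseq : ∀ k : ℕ, ∃ ρ ∈ S x, ρf x - 1 / (k + 1) < ρ := by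
      intro k
      exact exists_lt_of_lt_csSup hne (by
        have : (0:ℝ) < 1 / (k + 1) := by positivity
        linarith)
    choose u hu hu' using hseq
    have hu_le : ∀ k, u k ≤ ρf x := fun k => le_csSup (hbdd x) (hu k)
    have hu_pos : ∀ k, 0 < u k := fun k => (hu k).1.1
    have hlim : Tendsto u atTop (𝓝 (ρf x)) := by
      have h1 : Tendsto (fun k : ℕ => ρf x - 1 / (k + 1)) atTop (𝓝 (ρf x)) := by
        have := tendsto_one_div_add_atTop_nhds_zero_nat (𝕜 := ℝ)
        simpa using tendsto_const_nhds.sub this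
      exact tendsto_of_tendsto_of_tendsto_of_le_of_le h1 tendsto_const_nhds
        (fun k => (hu' k).le) hu_le
    have hpow : Tendsto (fun k => (u k) ^ n) atTop (𝓝 ((ρf x) ^ n)) := hlim.pow n
    have htend : Tendsto (fun k => ENNReal.ofReal ε * (ENNReal.ofReal ((u k) ^ n) * V))
        atTop (𝓝 (ENNReal.ofReal ε * (ENNReal.ofReal ((ρf x) ^ n) * V))) := by
      refine ENNReal.Tendsto.const_mul ?_ (Or.inr ENNReal.ofReal_ne_top)
      exact ENNReal.Tendsto.mul_const (ENNReal.tendsto_ofReal hpow) (Or.inr hVt)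
    rw [hball x (ρf x) (hρ_pos x hx).le]
    refine le_of_tendsto htend (Eventually.of_forall fun k => ?_)
    calc ENNReal.ofReal ε * (ENNReal.ofReal ((u k) ^ n) * V)
        = ENNReal.ofReal ε * volume (ball x (u k)) := by rw [hball x (u k) (hu_pos k).le]
      _ ≤ volume (C ∩ ball x (u k)) := (hu k).2
      _ ≤ volume (C ∩ ball x (ρf x)) :=
          measure_mono (inter_subset_inter_right _ (ball_subset_ball (hu_le k)))
  -- maximality: beyond the supremum radius the density drops below ε
  have hρ_max : ∀ x ∈ G, ∀ ρ' : ℝ, ρf x < ρ' → ρ' ≤ r →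
      volume (C ∩ ball x ρ') ≤ ENNReal.ofReal ε * volume (ball x ρ') := by
    intro x hx ρ' hρ' hρ'r
    by_contra h
    push_neg at h
    have hmem : ρ' ∈ S x := ⟨⟨(hρ_pos x hx).trans hρ', hρ'r⟩, h.le⟩
    exact absurd (le_csSup (hbdd x) hmem) (not_le.2 hρ')
  -- from condition (ii) and the density of A, D covers a c₁-fraction of each ball
  have hkey1 : ∀ x ∈ G,
      ENNReal.ofReal c₁ * volume (ball x (ρf x)) ≤ volume (D ∩ ball x (ρf x)) := by
    intro x hx
    have hxA : x ∈ A := hDA (hCD hx.1)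
    have hsub : ball x (ρf x) ∩ A ⊆ D :=
      hii x hxA _ (hρ_pos x hx) (hρ_le x hx) (hρ_mem x hx)
    calc ENNReal.ofReal c₁ * volume (ball x (ρf x))
        ≤ volume (ball x (ρf x) ∩ A) :=
          hdens x hxA _ (hρ_pos x hx) ((hρ_le x hx).trans hrr₁)
      _ ≤ volume (D ∩ ball x (ρf x)) :=
          measure_mono fun y hy => ⟨hsub hy, hy.1⟩
  -- closed balls vs open balls
  have hcb_le : ∀ (x : Fin n → ℝ) (ρ : ℝ),
      volume (C ∩ closedBall x ρ) ≤ volume (C ∩ ball x ρ) := by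
    intro x ρ
    calc volume (C ∩ closedBall x ρ)
        ≤ volume ((C ∩ ball x ρ) ∪ sphere x ρ) := by
          refine measure_mono ?_
          rw [← ball_union_sphere]
          rintro y ⟨hyC, hy⟩
          rcases hy with hy | hy
          · exact Or.inl ⟨hyC, hy⟩
          · exact Or.inr hy
      _ ≤ volume (C ∩ ball x ρ) + volume (sphere x ρ) := measure_union_le _ _
      _ = volume (C ∩ ball x ρ) := by rw [Measure.addHaar_sphere volume x ρ, add_zero]
  -- key estimate on enlarged balls
  have hkey2 : ∀ x ∈ G,
      volume (C ∩ closedBall x (4 * ρf x)) ≤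
        ENNReal.ofReal ε * (ENNReal.ofReal ((4:ℝ) ^ n) * volume (ball x (ρf x))) := by
    intro x hx
    have hρpos := hρ_pos x hx
    have hvol4 : volume (ball x (4 * ρf x)) =
        ENNReal.ofReal ((4:ℝ) ^ n) * volume (ball x (ρf x)) := by
      rw [hball x (4 * ρf x) (by linarith), hball x (ρf x) hρpos.le, mul_pow,
        ENNReal.ofReal_mul (by positivity), mul_assoc]
    refine (hcb_le x (4 * ρf x)).trans ?_
    rcases le_or_gt (4 * ρf x) r with h4 | h4
    · calc volume (C ∩ ball x (4 * ρf x))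
          ≤ ENNReal.ofReal ε * volume (ball x (4 * ρf x)) :=
            hρ_max x hx _ (by linarith) h4
        _ = ENNReal.ofReal ε * (ENNReal.ofReal ((4:ℝ) ^ n) * volume (ball x (ρf x))) := by
            rw [hvol4]
    · calc volume (C ∩ ball x (4 * ρf x))
          ≤ volume C := measure_mono inter_subset_left
        _ ≤ ENNReal.ofReal (ε * r ^ n) * V := hCsmall.le
        _ ≤ ENNReal.ofReal (ε * (4 * ρf x) ^ n) * V := by
            refine mul_le_mul_left (ENNReal.ofReal_le_ofReal ?_) V
            have hpow : r ^ n ≤ (4 * ρf x) ^ n := pow_le_pow_left₀ hr.le h4.le n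
            nlinarith
        _ = ENNReal.ofReal ε * (ENNReal.ofReal ((4:ℝ) ^ n) * volume (ball x (ρf x))) := by
            rw [hball x (ρf x) hρpos.le, ENNReal.ofReal_mul hε.le, mul_pow,
              ENNReal.ofReal_mul (by positivity), mul_assoc, mul_assoc]
  -- almost every point of C is in G (Lebesgue density)
  have hnull : volume (C \ G) = 0 := by
    have hdensity := Besicovitch.ae_tendsto_measure_inter_div volume C
    have hae : ∀ᵐ x ∂volume.restrict C, x ∈ G := by
      filter_upwards [hdensity, ae_restrict_mem hC] with x hx hxC
      refine ⟨hxC, ?_⟩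
      have hεlt : (ENNReal.ofReal ε) < 1 := ENNReal.ofReal_lt_one.2 hε1
      have hev : ∀ᶠ ρ in 𝓝[>] (0:ℝ),
          ENNReal.ofReal ε < volume (C ∩ closedBall x ρ) / volume (closedBall x ρ) :=
        hx.eventually (eventually_gt_nhds hεlt)
      have hIoc : Ioc (0:ℝ) r ∈ 𝓝[>] (0:ℝ) := Ioc_mem_nhdsGT_of_mem ⟨le_refl _, hr⟩
      have hIoc' : ∀ᶠ ρ in 𝓝[>] (0:ℝ), ρ ∈ Ioc (0:ℝ) r := hIoc
      obtain ⟨ρ, hρlt, hρmem⟩ := (hev.and hIoc').exists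
      refine ⟨ρ, hρmem, ?_⟩
      have hb0 : volume (closedBall x ρ) ≠ 0 := (measure_closedBall_pos volume x hρmem.1).ne'
      have hbt : volume (closedBall x ρ) ≠ ⊤ := measure_closedBall_lt_top.ne
      have h1 : ENNReal.ofReal ε * volume (closedBall x ρ) < volume (C ∩ closedBall x ρ) :=
        (ENNReal.lt_div_iff_mul_lt (Or.inl hb0) (Or.inl hbt)).1 hρlt
      calc ENNReal.ofReal ε * volume (ball x ρ)
          = ENNReal.ofReal ε * volume (closedBall x ρ) := by
            rw [Measure.addHaar_closedBall_eq_addHaar_ball]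
        _ ≤ volume (C ∩ closedBall x ρ) := h1.le
        _ ≤ volume (C ∩ ball x ρ) := hcb_le x ρ
    rw [ae_iff, Measure.restrict_apply' hC] at hae
    exact measure_mono_null (fun y hy => mem_inter hy.2 hy.1) hae
  -- Vitali covering argument
  obtain ⟨u, huG, hdisj, hcov⟩ :=
    Vitali.exists_disjoint_subfamily_covering_enlargement_closedBall G id ρf r
      (fun a ha => hρ_le a ha) 4 (by norm_num)
  simp only [id] at hdisj hcov
  have hu_count : u.Countable := by
    refine hdisj.countable_of_nonempty_interior fun b hb => ?_
    exact ⟨b, ball_subset_interior_closedBall (mem_ball_self (hρ_pos b (huG hb)))⟩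
  have hGcov : G ⊆ ⋃ b ∈ u, closedBall b (4 * ρf b) := by
    intro a ha
    obtain ⟨b, hb, hsub⟩ := hcov a ha
    exact mem_biUnion hb (hsub (mem_closedBall_self (hρ_pos a ha).le))
  -- the constant
  set K : ℝ≥0∞ := ENNReal.ofReal ε * (ENNReal.ofReal ((4:ℝ) ^ n) * ENNReal.ofReal c₁⁻¹) with hK
  have hKval : ENNReal.ofReal ((4:ℝ) ^ n * ε / c₁) = K := by
    rw [hK, div_eq_mul_inv, ← ENNReal.ofReal_mul (by positivity),
      ← ENNReal.ofReal_mul (by positivity)]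
    congr 1
    ring
  have hball_le : ∀ x ∈ G, volume (ball x (ρf x)) ≤
      ENNReal.ofReal c₁⁻¹ * volume (D ∩ ball x (ρf x)) := by
    intro x hx
    have h1 : ENNReal.ofReal c₁⁻¹ * ENNReal.ofReal c₁ = 1 := by
      rw [← ENNReal.ofReal_mul (by positivity), inv_mul_cancel₀ hc₁.ne', ENNReal.ofReal_one]
    calc volume (ball x (ρf x))
        = ENNReal.ofReal c₁⁻¹ * ENNReal.ofReal c₁ * volume (ball x (ρf x)) := by
          rw [h1, one_mul]
      _ = ENNReal.ofReal c₁⁻¹ * (ENNReal.ofReal c₁ * volume (ball x (ρf x))) := mul_assoc _ _ _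
      _ ≤ ENNReal.ofReal c₁⁻¹ * volume (D ∩ ball x (ρf x)) := by gcongr; exact hkey1 x hx
  -- final chain
  have hdisjD : u.PairwiseDisjoint fun b => D ∩ ball b (ρf b) := by
    refine hdisj.mono fun b => ?_
    exact inter_subset_right.trans ball_subset_closedBall
  calc volume C
      ≤ volume ((⋃ b ∈ u, C ∩ closedBall b (4 * ρf b)) ∪ (C \ G)) := by
        refine measure_mono fun y hy => ?_
        by_cases hyG : y ∈ G
        · obtain ⟨b, hb, hyb⟩ := mem_iUnion₂.1 (hGcov hyG)
          exact Or.inl (mem_iUnion₂.2 ⟨b, hb, hy, hyb⟩)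
        · exact Or.inr ⟨hy, hyG⟩
    _ ≤ volume (⋃ b ∈ u, C ∩ closedBall b (4 * ρf b)) + volume (C \ G) := measure_union_le _ _
    _ = volume (⋃ b ∈ u, C ∩ closedBall b (4 * ρf b)) := by rw [hnull, add_zero]
    _ ≤ ∑' b : u, volume (C ∩ closedBall b (4 * ρf b)) := measure_biUnion_le volume hu_count _
    _ ≤ ∑' b : u, K * volume (D ∩ ball (b : Fin n → ℝ) (ρf b)) := by
        refine ENNReal.tsum_le_tsum fun b => ?_
        have hbG : (b : Fin n → ℝ) ∈ G := huG b.2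
        calc volume (C ∩ closedBall (b : Fin n → ℝ) (4 * ρf b))
            ≤ ENNReal.ofReal ε * (ENNReal.ofReal ((4:ℝ) ^ n) *
                volume (ball (b : Fin n → ℝ) (ρf b))) := hkey2 b hbG
          _ ≤ ENNReal.ofReal ε * (ENNReal.ofReal ((4:ℝ) ^ n) *
                (ENNReal.ofReal c₁⁻¹ * volume (D ∩ ball (b : Fin n → ℝ) (ρf b)))) := by
              gcongr
              exact hball_le b hbG
          _ = K * volume (D ∩ ball (b : Fin n → ℝ) (ρf b)) := by
              rw [hK]; ring
    _ = K * ∑' b : u, volume (D ∩ ball (b : Fin n → ℝ) (ρf b)) := ENNReal.tsum_mul_left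
    _ = K * volume (⋃ b ∈ u, D ∩ ball b (ρf b)) := by
        rw [measure_biUnion hu_count hdisjD fun b _ => hD.inter measurableSet_ball]
    _ ≤ K * volume D := by
        gcongr
        exact iUnion₂_subset fun b _ => inter_subset_left
    _ = ENNReal.ofReal ((4:ℝ) ^ n * ε / c₁) * volume D := by rw [hKval]
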